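/- Let ω ∈ ℤ₂ be the root of x² - x + 2 = 0 with v₂(ω) = 1, and set ω̄ = 1 - ω. If m and n are integers with 1 ≤ m < n and ω^n - ω̄^n = ω^m - ω̄^m in ℤ₂, then m ≤ v₂(n - m) + 2. -/

import Mathlib

namespace MleValAux

lemma two_prime : Prime (2 : ℤ_[2]) := by
  have := PadicInt.prime_p (p := 2); simpa using this

lemma two_nz : (2 : ℤ_[2]) ≠ 0 := two_prime.ne_zero

lemma not_two_dvd_one : ¬ (2 : ℤ_[2]) ∣ 1 :=
  fun h => two_prime.not_unit (isUnit_of_dvd_one h)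

/-- `P r x` means `2^r` exactly divides `x`. -/
def P (r : ℕ) (x : ℤ_[2]) : Prop := 2^r ∣ x ∧ ¬ 2^(r+1) ∣ x

lemma P_neg {r : ℕ} {x : ℤ_[2]} (h : P r x) : P r (-x) :=
  ⟨h.1.neg_right, fun hd => h.2 (dvd_neg.mp hd)⟩

lemma P_mul {r s : ℕ} {x y : ℤ_[2]} (hx : P r x) (hy : P s y) : P (r+s) (x*y) := by
  obtain ⟨⟨x1, rfl⟩, hx2⟩ := hx
  obtain ⟨⟨y1, rfl⟩, hy2⟩ := hy
  have hx1 : ¬ (2:ℤ_[2]) ∣ x1 := fun h => hx2 (by rw [pow_succ]; exact mul_dvd_mul_left _ h)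
  have hy1 : ¬ (2:ℤ_[2]) ∣ y1 := fun h => hy2 (by rw [pow_succ]; exact mul_dvd_mul_left _ h)
  refine ⟨⟨x1*y1, by ring⟩, fun hd => ?_⟩
  have h1 : (2:ℤ_[2])^(r+s) * 2 ∣ (2:ℤ_[2])^(r+s) * (x1*y1) := by
    rw [← pow_succ]
    exact hd.trans (dvd_of_eq (by ring))
  have h2 : (2:ℤ_[2]) ∣ x1 * y1 :=
    (mul_dvd_mul_iff_left (pow_ne_zero _ two_nz)).mp h1
  rcases two_prime.2.2 _ _ h2 with h | h
  · exact hx1 h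
  · exact hy1 h

lemma P_unique {r s : ℕ} {x : ℤ_[2]} (hr : P r x) (hs : P s x) : r = s := by
  by_contra hne
  rcases Nat.lt_or_ge r s with h | h
  · exact hr.2 ((pow_dvd_pow 2 (by omega)).trans hs.1)
  · exact hs.2 ((pow_dvd_pow 2 (by omega : s + 1 ≤ r)).trans hr.1)

lemma P_pow {r : ℕ} {x : ℤ_[2]} (h : P r x) (j : ℕ) : P (r*j) (x^j) := by
  induction j with
  | zero => exact ⟨by simp, by simpa using not_two_dvd_one⟩
  | succ j ih =>
      have := P_mul ih h
      rw [← pow_succ] at this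
      have he : r * j + r = r * (j+1) := by ring
      rwa [he] at this

lemma P_of_mul_eq_pow {x y : ℤ_[2]} {t : ℕ} (h : x * y = 2^t) (hy : ¬ (2:ℤ_[2]) ∣ y) :
    P t x := by
  have hyu : IsUnit y := by
    by_contra hu
    apply hy
    have : y ∈ IsLocalRing.maximalIdeal ℤ_[2] := hu
    rw [PadicInt.maximalIdeal_eq_span_p, Ideal.mem_span_singleton] at this
    simpa using this
  obtain ⟨u, rfl⟩ := hyu
  constructor
  · exact ⟨(u⁻¹ : ℤ_[2]ˣ), by rw [← h]; simp [mul_assoc]⟩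
  · intro hd
    have h1 : (2:ℤ_[2])^(t+1) ∣ 2^t := h ▸ hd.mul_right _
    rw [pow_succ] at h1
    have : (2:ℤ_[2]) ∣ 1 :=
      (mul_dvd_mul_iff_left (pow_ne_zero t two_nz)).mp (by simpa using h1)
    exact not_two_dvd_one this

lemma P_geom {u : ℤ_[2]} (hu : (2:ℤ_[2]) ∣ u - 1) {b : ℕ} (hb : ¬ 2 ∣ b) :
    P 0 (∑ i ∈ Finset.range b, u^i) := by
  refine ⟨by simp, fun hd => ?_⟩
  rw [pow_one] at hd
  have h1 : (2:ℤ_[2]) ∣ (∑ i ∈ Finset.range b, u^i) - (b:ℤ_[2]) := by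
    have he : (∑ i ∈ Finset.range b, u^i) - (b:ℤ_[2])
        = ∑ i ∈ Finset.range b, (u^i - 1) := by
      rw [Finset.sum_sub_distrib]; simp
    rw [he]
    exact Finset.dvd_sum fun i _ => hu.trans (by simpa using sub_dvd_pow_sub_pow u 1 i)
  have h2 : (2:ℤ_[2]) ∣ (b:ℤ_[2]) := by
    have := dvd_sub hd h1
    simpa using this
  obtain ⟨c, rfl⟩ : ∃ c, b = 2*c + 1 := ⟨b/2, by omega⟩
  have : (2:ℤ_[2]) ∣ 1 := by
    have h3 : ((2*c+1 : ℕ) : ℤ_[2]) = 2*(c:ℤ_[2]) + 1 := by push_cast; ring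
    rw [h3] at h2
    have := dvd_sub h2 (Dvd.intro (c:ℤ_[2]) rfl)
    simpa using this
  exact not_two_dvd_one this

lemma le_val_iff {x : ℤ_[2]} (hx : x ≠ 0) (n : ℕ) :
    (2:ℤ_[2])^n ∣ x ↔ (n:ℤ) ≤ x.valuation := by
  have := PadicInt.mem_span_pow_iff_le_valuation x hx n
  rw [Ideal.mem_span_singleton] at this
  simpa using this

end MleValAux

open MleValAux in
/-- If `ω ∈ ℤ₂` is the root of `x² - x + 2` with `v₂(ω) = 1`, `ω̄ = 1 - ω`, and
`ω^n - ω̄^n = ω^m - ω̄^m` with `1 ≤ m < n`, then `m ≤ v₂(n - m) + 2`. -/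
theorem m_le_val_add_two (ω : ℤ_[2]) (hroot : ω ^ 2 - ω + 2 = 0) (hval : ω.valuation = 1)
    (m n : ℕ) (hm : 1 ≤ m) (hmn : m < n)
    (heq : ω ^ n - (1 - ω) ^ n = ω ^ m - (1 - ω) ^ m) :
    (m : ℤ) ≤ ((n : ℤ_[2]) - (m : ℤ_[2])).valuation + 2 := by
  -- basic setup
  have hprod : ω * (1 - ω) = 2 := by linear_combination -hroot
  have hω0 : ω ≠ 0 := by
    intro h
    rw [h, zero_mul] at hprod
    exact two_nz hprod.symm
  have hω : P 1 ω := by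
    constructor
    · have := (le_val_iff hω0 1).mpr (by rw [hval])
      simpa using this
    · intro h
      have := (le_val_iff hω0 2).mp h
      rw [hval] at this; norm_num at this
  have h2ω : (2:ℤ_[2]) ∣ ω := by simpa using hω.1
  -- 1 - ω is odd
  have hνodd : ¬ (2:ℤ_[2]) ∣ (1 - ω) := by
    intro h
    have h4 : (2:ℤ_[2])*2 ∣ ω * (1 - ω) := mul_dvd_mul h2ω h
    rw [hprod] at h4
    have : (2:ℤ_[2]) ∣ 1 := (mul_dvd_mul_iff_left two_nz).mp (by simpa using h4)
    exact not_two_dvd_one this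
  have hνm : ∀ j : ℕ, P 0 ((1-ω)^j) := by
    intro j
    refine ⟨by simp, fun hd => ?_⟩
    rw [pow_one] at hd
    exact hνodd (two_prime.dvd_of_dvd_pow hd)
  -- exact valuations of 1-ω-related quantities
  have hP1 : P 1 ((1-ω) - 1) := by
    have : ((1-ω) - 1) = -ω := by ring
    rw [this]; exact P_neg hω
  have hdvd_ν1 : (2:ℤ_[2]) ∣ (1-ω) - 1 := by simpa using hP1.1
  have hP3 : P 3 ((1-ω)^2 - 1) := by
    have hmul : (1 - (1-ω)^2) * (3 - ω) = 2^3 := by linear_combination (ω - 4) * hroot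
    have hodd : ¬ (2:ℤ_[2]) ∣ (3 - ω) := by
      intro h
      have h3 : (2:ℤ_[2]) ∣ 3 := by
        have := dvd_add h h2ω; simpa using this
      have h1 : (2:ℤ_[2]) ∣ 3 - 2 := dvd_sub h3 (dvd_refl 2)
      norm_num at h1
      exact not_two_dvd_one h1
    have := P_neg (P_of_mul_eq_pow hmul hodd)
    have he : -(1 - (1-ω)^2) = (1-ω)^2 - 1 := by ring
    rwa [he] at this
  -- powers of two: P (a+2) ((1-ω)^(2^a) - 1) for a ≥ 1
  have key : ∀ a : ℕ, 1 ≤ a → P (a+2) ((1-ω)^(2^a) - 1) := by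
    intro a ha
    induction a, ha using Nat.le_induction with
    | base => simpa using hP3
    | succ a ha ih =>
        set x := (1-ω)^(2^a) with hx
        have h2x : (2:ℤ_[2]) ∣ x - 1 := by
          have hp : (2:ℤ_[2])^1 ∣ 2^(a+2) := pow_dvd_pow 2 (by omega)
          have := hp.trans ih.1
          simpa using this
        have h4x : (2:ℤ_[2])^2 ∣ x - 1 :=
          (pow_dvd_pow (2:ℤ_[2]) (show 2 ≤ a+2 by omega)).trans ih.1
        have hxp1 : P 1 (x + 1) := by
          constructor
          · rw [pow_one]
            have he : x + 1 = (x - 1) + 2 := by ring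
            rw [he]; exact dvd_add h2x dvd_rfl
          · intro h4
            have h4' : (2:ℤ_[2])^2 ∣ x + 1 := by
              have h11 : (1:ℕ) + 1 = 2 := rfl
              rwa [h11] at h4
            have hd2 : (2:ℤ_[2])^2 ∣ (x+1) - (x-1) := dvd_sub h4' h4x
            have he : (x+1) - (x-1) = (2:ℤ_[2]) := by ring
            rw [he, pow_two] at hd2
            have : (2:ℤ_[2]) ∣ 1 := (mul_dvd_mul_iff_left two_nz).mp (by simpa using hd2)
            exact not_two_dvd_one this
        have hsq : P (a+3) (x^2 - 1) := by
          have := P_mul ih hxp1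
          have he : (x-1)*(x+1) = x^2 - 1 := by ring
          rwa [he] at this
        have he2 : x^2 = (1-ω)^(2^(a+1)) := by
          rw [hx, ← pow_mul, pow_succ]
        rw [he2] at hsq
        exact hsq
  -- the equation
  obtain ⟨k, rfl, hk1⟩ : ∃ k, n = m + k ∧ 1 ≤ k := ⟨n - m, by omega, by omega⟩
  have heq2 : ω ^ m * (ω ^ k - 1) = (1 - ω) ^ m * ((1 - ω) ^ k - 1) := by
    rw [pow_add, pow_add] at heq
    linear_combination heq
  -- LHS has exact valuation m
  have hL : P m (ω ^ m * (ω ^ k - 1)) := by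
    have h1 : P m (ω ^ m) := by simpa using P_pow hω m
    have h2 : P 0 (ω ^ k - 1) := by
      refine ⟨by simp, fun hd => ?_⟩
      rw [pow_one] at hd
      have hk2 : (2:ℤ_[2]) ∣ ω ^ k := dvd_pow h2ω (by omega)
      have : (2:ℤ_[2]) ∣ 1 := by
        have := dvd_sub hk2 hd; simpa using this
      exact not_two_dvd_one this
    simpa using P_mul h1 h2
  -- write k = 2^a * b with b odd
  set a := k.factorization 2 with hadef
  set b := k / 2^a with hbdef
  have hab : 2^a * b = k := Nat.ordProj_mul_ordCompl_eq_self k 2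
  have hb : ¬ 2 ∣ b := Nat.not_dvd_ordCompl Nat.prime_two (by omega)
  -- target element is (k : ℤ_[2])
  have hcast : ((m + k : ℕ) : ℤ_[2]) - (m : ℤ_[2]) = ((k : ℕ) : ℤ_[2]) := by
    push_cast; ring
  rw [hcast]
  rcases Nat.eq_zero_or_pos a with ha0 | hapos
  · -- k odd : m = 1
    have hbk : ¬ 2 ∣ k := by
      rw [← hab, ha0]; simpa using hb
    have hgeo : P 1 ((1-ω)^k - 1) := by
      have := P_mul (P_geom hdvd_ν1 hbk) hP1
      rw [geom_sum_mul] at this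
      simpa using this
    have hR : P 1 ((1 - ω) ^ m * ((1 - ω) ^ k - 1)) := by
      simpa using P_mul (hνm m) hgeo
    have hm1 : m = 1 := P_unique hL (heq2 ▸ hR)
    have hnn := Nat.zero_le (((k : ℕ) : ℤ_[2]).valuation)
    rw [hm1]
    omega
  · -- a ≥ 1 : m = a + 2 and v₂(k) = a
    have hu := key a hapos
    have hu2 : (2:ℤ_[2]) ∣ (1-ω)^(2^a) - 1 := by
      have hp : (2:ℤ_[2])^1 ∣ 2^(a+2) := pow_dvd_pow 2 (by omega)
      have := hp.trans hu.1
      simpa using this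
    have hgeo : P (a+2) ((1-ω)^k - 1) := by
      have := P_mul (P_geom hu2 hb) hu
      rw [geom_sum_mul, ← pow_mul, hab] at this
      simpa using this
    have hR : P (a+2) ((1 - ω) ^ m * ((1 - ω) ^ k - 1)) := by
      simpa using P_mul (hνm m) hgeo
    have hma : m = a + 2 := P_unique hL (heq2 ▸ hR)
    have hk0 : ((k : ℕ) : ℤ_[2]) ≠ 0 := Nat.cast_ne_zero.mpr (by omega)
    have hdvd : (2:ℤ_[2])^a ∣ ((k : ℕ) : ℤ_[2]) := by
      refine ⟨(b : ℤ_[2]), ?_⟩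
      rw [← hab]; push_cast; ring
    have hval2 : (a : ℤ) ≤ ((k : ℕ) : ℤ_[2]).valuation := (le_val_iff hk0 a).mp hdvd
    rw [hma]
    push_cast
    omega
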